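/- Let n be a positive integer, y ∈ ℝⁿ, and (P_i)_{i∈ι} a family of symmetric (n+1)×(n+1) real matrices. Define Y as the (n+1)×(n+1) block matrix ((‖y‖², −yᵀ), (−y, I)), and for q ∈ ℝⁿ write v(q) = (1, q) ∈ ℝⁿ⁺¹. Suppose Q* is a positive semidefinite (n+1)×(n+1) matrix with Q*₀₀ = 1 and trace(P_i * Q*) = 0 for all i, which minimizes trace(Y * Q) over all positive semidefinite Q with Q₀₀ = 1 and trace(P_i * Q) = 0 for all i, and suppose rank(Q*) = 1. Then there exists q* ∈ ℝⁿ with Q* = v(q*)v(q*)ᵀ such that q* lies in the variety (v(q*)ᵀ P_i v(q*) = 0 for all i) and q* is a globally optimal solution of the projection problem: ‖q* − y‖ ≤ ‖q − y‖ for every q ∈ ℝⁿ with v(q)ᵀ P_i v(q) = 0 for all i. That is, exact (rank-one) recovery in the semidefinite relaxation yields the globally closest point of the variety to y. -/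

import Mathlib

open Matrix

/-- `v(q) = (1, q) ∈ ℝⁿ⁺¹`: the vector with first coordinate 1 followed by `q`. -/
def liftVec {n : ℕ} (q : EuclideanSpace ℝ (Fin n)) : Fin (n + 1) → ℝ :=
  Fin.cons 1 (fun j => q j)

/-- The SDP cost matrix `Y = ((‖y‖², −yᵀ), (−y, I))`. -/
noncomputable def sdpCost {n : ℕ} (y : EuclideanSpace ℝ (Fin n)) :
    Matrix (Fin (n + 1)) (Fin (n + 1)) ℝ :=
  Fin.cons (Fin.cons (‖y‖ ^ 2) (fun j => -(y j)))
    (fun i => Fin.cons (-(y i)) (fun j => if i = j then (1 : ℝ) else 0))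

lemma trace_mul_vecMulVec {m : Type*} [Fintype m] (P : Matrix m m ℝ) (u : m → ℝ) :
    (P * vecMulVec u u).trace = u ⬝ᵥ (P *ᵥ u) := by
  simp only [Matrix.trace, Matrix.diag, Matrix.mul_apply, vecMulVec_apply, dotProduct,
    Matrix.mulVec, Finset.mul_sum]
  exact Finset.sum_congr rfl fun i _ => Finset.sum_congr rfl fun k _ => by ring

lemma vecMulVec_self_posSemidef {m : Type*} [Fintype m] (u : m → ℝ) :
    (vecMulVec u u).PosSemidef := by
  rw [posSemidef_iff_dotProduct_mulVec]
  constructor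
  · ext i j
    simp [vecMulVec_apply, mul_comm]
  · intro x
    have : x ⬝ᵥ (vecMulVec u u) *ᵥ x = (u ⬝ᵥ x) * (u ⬝ᵥ x) := by
      simp only [dotProduct, Matrix.mulVec, vecMulVec_apply, Finset.mul_sum, Finset.sum_mul]
      rw [Finset.sum_comm]
      exact Finset.sum_congr rfl fun i _ => Finset.sum_congr rfl fun k _ => by ring
    rw [star_trivial, this]
    exact mul_self_nonneg _

lemma norm_sq_eucl {n : ℕ} (x : EuclideanSpace ℝ (Fin n)) : ‖x‖ ^ 2 = ∑ i, x i ^ 2 := by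
  rw [EuclideanSpace.norm_eq, Real.sq_sqrt (by positivity)]
  simp [sq_abs]

lemma cost_eval {n : ℕ} (y q : EuclideanSpace ℝ (Fin n)) :
    liftVec q ⬝ᵥ (sdpCost y *ᵥ liftVec q) = ‖q - y‖ ^ 2 := by
  have hsub : ‖q - y‖ ^ 2 = ∑ i, (q i - y i) ^ 2 := by
    rw [norm_sq_eucl]
    exact Finset.sum_congr rfl fun i _ => by simp [PiLp.sub_apply]
  rw [hsub]
  simp only [dotProduct, Matrix.mulVec, liftVec, sdpCost, Fin.sum_univ_succ, Fin.cons_zero,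
    Fin.cons_succ, dotProduct]
  rw [norm_sq_eucl]
  push_cast
  ring_nf
  have hif : ∀ x : Fin n, (∑ x_1 : Fin n, (if x = x_1 then (1:ℝ) else 0) * q x_1) = q x := by
    intro x
    simp [Finset.sum_ite_eq]
  simp only [hif]
  rw [← Finset.sum_add_distrib, ← Finset.sum_add_distrib]
  exact Finset.sum_congr rfl fun i _ => by ring

lemma rank_one_decomp {n : ℕ} (A : Matrix (Fin (n + 1)) (Fin (n + 1)) ℝ)
    (hA : A.PosSemidef) (h00 : A 0 0 = 1) (hr : A.rank = 1) :
    A = vecMulVec (fun i => A i 0) (fun i => A i 0) := by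
  have hsym : ∀ i j, A j i = A i j := fun i j => by
    have := hA.1.apply i j; simpa using this
  have h1 : Module.finrank ℝ ↥(LinearMap.range A.mulVecLin) = 1 := hr
  obtain ⟨v, hv0, hv⟩ := finrank_eq_one_iff'.mp h1
  have hcol : ∀ j, ∃ c : ℝ, ∀ i, c * (v : Fin (n + 1) → ℝ) i = A i j := by
    intro j
    have hmem : (fun i => A i j) ∈ LinearMap.range A.mulVecLin :=
      ⟨Pi.single j 1, by funext i; simp [Matrix.mulVecLin_apply, Matrix.mulVec_single]⟩
    obtain ⟨c, hc⟩ := hv ⟨_, hmem⟩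
    refine ⟨c, fun i => ?_⟩
    have := congrFun (congrArg Subtype.val hc) i
    simpa using this
  choose c hc using hcol
  have hunit : c 0 * (v : Fin (n + 1) → ℝ) 0 = 1 := by rw [hc 0 0, h00]
  have key : ∀ i j, A i j = A 0 j * A i 0 := by
    intro i j
    rw [← hc j i, ← hc j 0, ← hc 0 i]
    linear_combination (-(c j * (v : Fin (n + 1) → ℝ) i)) * hunit
  ext i j
  rw [vecMulVec_apply, key i j, ← hsym j 0]
  ring

/-- If the optimal solution `Q*` of the SDP relaxation of Euclidean projection
onto the quadratic variety has rank one, then `Q* = v(q*)v(q*)ᵀ` where `q*` lies on the variety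
and is a globally closest point of the variety to `y` (exact recovery). -/
theorem sdp_rank_one_exact_recovery
    (n : ℕ) (hn : 0 < n)
    (y : EuclideanSpace ℝ (Fin n))
    {ι : Type*} (P : ι → Matrix (Fin (n + 1)) (Fin (n + 1)) ℝ)
    (hP : ∀ i, (P i).IsSymm)
    (Qstar : Matrix (Fin (n + 1)) (Fin (n + 1)) ℝ)
    (hQstar_psd : Qstar.PosSemidef)
    (hQstar_corner : Qstar 0 0 = 1)
    (hQstar_feas : ∀ i, (P i * Qstar).trace = 0)
    (hQstar_min : ∀ Q : Matrix (Fin (n + 1)) (Fin (n + 1)) ℝ,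
      Q.PosSemidef → Q 0 0 = 1 → (∀ i, (P i * Q).trace = 0) →
        (sdpCost y * Qstar).trace ≤ (sdpCost y * Q).trace)
    (hQstar_rank : Qstar.rank = 1) :
    ∃ qstar : EuclideanSpace ℝ (Fin n),
      Qstar = Matrix.vecMulVec (liftVec qstar) (liftVec qstar) ∧
      (∀ i, liftVec qstar ⬝ᵥ (P i *ᵥ liftVec qstar) = 0) ∧
      (∀ q : EuclideanSpace ℝ (Fin n),
        (∀ i, liftVec q ⬝ᵥ (P i *ᵥ liftVec q) = 0) →
          ‖qstar - y‖ ≤ ‖q - y‖) := by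
  set u : Fin (n + 1) → ℝ := fun i => Qstar i 0 with hu
  set qv : EuclideanSpace ℝ (Fin n) := WithLp.toLp 2 (fun j : Fin n => Qstar j.succ 0) with hqv
  have hdecomp : Qstar = vecMulVec u u :=
    rank_one_decomp Qstar hQstar_psd hQstar_corner hQstar_rank
  have hlift : liftVec qv = u := by
    funext i
    refine Fin.cases ?_ (fun j => ?_) i <;> simp [liftVec, hu, hqv, hQstar_corner]
  have hdecomp' : Qstar = vecMulVec
      (liftVec qv)
      (liftVec qv) := by
    rw [hlift]; exact hdecomp
  refine ⟨qv, hdecomp', ?_, ?_⟩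
  · intro i
    rw [hlift, ← trace_mul_vecMulVec, ← hdecomp]
    exact hQstar_feas i
  · intro q hq
    have hQpsd := vecMulVec_self_posSemidef (liftVec q)
    have hQc : (vecMulVec (liftVec q) (liftVec q)) 0 0 = 1 := by
      simp [vecMulVec_apply, liftVec]
    have hQf : ∀ i, (P i * vecMulVec (liftVec q) (liftVec q)).trace = 0 := by
      intro i; rw [trace_mul_vecMulVec]; exact hq i
    have hle := hQstar_min _ hQpsd hQc hQf
    rw [hdecomp', trace_mul_vecMulVec, trace_mul_vecMulVec,
      cost_eval, cost_eval] at hle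
    calc ‖qv - y‖
        = Real.sqrt (‖qv - y‖ ^ 2) :=
          (Real.sqrt_sq (norm_nonneg _)).symm
      _ ≤ Real.sqrt (‖q - y‖ ^ 2) := Real.sqrt_le_sqrt hle
      _ = ‖q - y‖ := Real.sqrt_sq (norm_nonneg _)
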